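/- Let q = 2 and n \ge 2d+1. For all 0 \le i \le d-1 and 1 \le j \le d, the eigenvalues of the Grassmann graph satisfy |G_j(i+1)| < |G_j(i)|. -/

import Mathlib

set_option maxHeartbeats 1000000

/-- The Gaussian binomial coefficient `[m choose l]_q = ∏_{t=1}^{l} (q^{m-t+1}-1)/(q^t-1)`. -/
def gaussBinom (q : ℚ) (m l : ℕ) : ℚ :=
  ∏ t ∈ Finset.range l, (q ^ (m - t) - 1) / (q ^ (t + 1) - 1)

/-- The eigenvalue `G_j(i)` of the Grassmann graph `G_q(n,d,j)`:
`G_j(i) = ∑_{h=0}^{j} (-1)^{j-h} q^{hi + C(j-h,2)} [d-i,h]_q [d-h,j-h]_q [n-d-i+h,h]_q`. -/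
def grassG (q : ℚ) (n d j i : ℕ) : ℚ :=
  ∑ h ∈ Finset.range (j + 1),
    (-1 : ℚ) ^ (j - h) * q ^ (h * i + (j - h).choose 2) *
      gaussBinom q (d - i) h * gaussBinom q (d - h) (j - h) * gaussBinom q (n - d - i + h) h

namespace GrassAux

lemma two_pow_pos (k : ℕ) : (0:ℚ) < 2^k := by positivity

lemma one_le_two_pow (k : ℕ) : (1:ℚ) ≤ 2^k := one_le_pow₀ one_le_two

lemma two_pow_le {k l : ℕ} (h : k ≤ l) : (2:ℚ)^k ≤ 2^l :=
  pow_le_pow_right₀ one_le_two h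

lemma two_le_two_pow {k : ℕ} (hk : 1 ≤ k) : (2:ℚ) ≤ 2^k := by
  calc (2:ℚ) = 2^1 := (pow_one 2).symm
  _ ≤ 2^k := two_pow_le hk

def gnum (m l : ℕ) : ℚ := ∏ t ∈ Finset.range l, ((2:ℚ)^(m-t) - 1)
def gden (l : ℕ) : ℚ := ∏ t ∈ Finset.range l, ((2:ℚ)^(t+1) - 1)

lemma gden_pos (l : ℕ) : 0 < gden l := Finset.prod_pos fun t _ => by
  have := two_le_two_pow (k := t+1) (by omega); linarith

lemma gnum_nonneg (m l : ℕ) : 0 ≤ gnum m l := Finset.prod_nonneg fun t _ => by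
  have := one_le_two_pow (m - t); linarith

lemma gnum_pos {m l : ℕ} (h : l ≤ m) : 0 < gnum m l := Finset.prod_pos fun t ht => by
  have ht' : t < l := Finset.mem_range.mp ht
  have := two_le_two_pow (k := m - t) (by omega); linarith

lemma gnum_eq_zero {m l : ℕ} (h : m < l) : gnum m l = 0 :=
  Finset.prod_eq_zero (Finset.mem_range.mpr h) (by simp)

lemma gnum_succ (m l : ℕ) : gnum m (l+1) = gnum m l * (2^(m-l) - 1) :=
  Finset.prod_range_succ _ _

lemma gnum_top (m l : ℕ) : gnum (m+1) (l+1) = (2^(m+1)-1) * gnum m l := by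
  rw [gnum, gnum, Finset.prod_range_succ']
  simp only [Nat.succ_sub_succ, Nat.sub_zero]
  ring

lemma gden_succ (l : ℕ) : gden (l+1) = gden l * (2^(l+1)-1) :=
  Finset.prod_range_succ _ _

lemma gnum_lower {m l : ℕ} (hm : 1 ≤ m) (hl : 1 ≤ l) :
    (2^m - 1) * gnum (m-1) l = gnum m l * (2^(m-l) - 1) := by
  obtain ⟨m', rfl⟩ : ∃ k, m = k+1 := ⟨m-1, by omega⟩
  obtain ⟨l', rfl⟩ : ∃ k, l = k+1 := ⟨l-1, by omega⟩
  simp only [Nat.add_sub_cancel, Nat.succ_sub_succ, Nat.sub_zero]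
  rw [gnum_top, gnum_succ]
  ring

lemma gaussBinom_eq (m l : ℕ) : gaussBinom 2 m l = gnum m l / gden l := by
  induction l with
  | zero => simp [gaussBinom, gnum, gden]
  | succ k ih =>
    rw [show gaussBinom 2 m (k+1)
        = gaussBinom 2 m k * ((2^(m-k)-1)/(2^(k+1)-1)) from Finset.prod_range_succ _ _,
      ih, gnum_succ, gden_succ, div_mul_div_comm]

/-- The (unsigned) `h`-th term of the eigenvalue sum. -/
def Tq (n d j i h : ℕ) : ℚ :=
  2^(h*i + (j-h).choose 2) * gaussBinom 2 (d-i) h * gaussBinom 2 (d-h) (j-h) *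
    gaussBinom 2 (n-d-i+h) h

lemma grassG_eq (n d j i : ℕ) :
    grassG 2 n d j i = ∑ h ∈ Finset.range (j+1), (-1:ℚ)^(j-h) * Tq n d j i h := by
  unfold grassG Tq
  exact Finset.sum_congr rfl fun h _ => by ring

lemma Tq_nonneg (n d j i h : ℕ) : 0 ≤ Tq n d j i h := by
  unfold Tq
  simp only [gaussBinom_eq]
  have d1 := (gden_pos h).le
  have d2 := (gden_pos (j-h)).le
  exact mul_nonneg (mul_nonneg (mul_nonneg (by positivity)
    (div_nonneg (gnum_nonneg _ _) d1)) (div_nonneg (gnum_nonneg _ _) d2))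
    (div_nonneg (gnum_nonneg _ _) d1)

lemma Tq_pos {n d j i h : ℕ} (hjd : j ≤ d) (h1 : h ≤ j) (h2 : h ≤ d - i) :
    0 < Tq n d j i h := by
  unfold Tq
  simp only [gaussBinom_eq]
  have n1 := gnum_pos h2
  have n2 : 0 < gnum (d-h) (j-h) := gnum_pos (Nat.sub_le_sub_right hjd h)
  have n3 : 0 < gnum (n-d-i+h) h := gnum_pos (Nat.le_add_left _ _)
  have d1 := gden_pos h
  have d2 := gden_pos (j-h)
  exact mul_pos (mul_pos (mul_pos (by positivity) (div_pos n1 d1)) (div_pos n2 d2))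
    (div_pos n3 d1)

lemma Tq_eq_zero {n d j i h : ℕ} (hh : d - i < h) : Tq n d j i h = 0 := by
  unfold Tq
  rw [gaussBinom_eq (d-i), gnum_eq_zero hh, zero_div, mul_zero, zero_mul, zero_mul]

lemma Tq_eq (n d j i h : ℕ) :
    Tq n d j i h = (2^(h*i + (j-h).choose 2) *
      (gnum (d-i) h * gnum (d-h) (j-h) * gnum (n-d-i+h) h)) /
      (gden h * gden (j-h) * gden h) := by
  unfold Tq
  simp only [gaussBinom_eq]
  ring

lemma Tq_ratio (n d j i h : ℕ) (h1 : h + 1 ≤ j) (hjd : j ≤ d) :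
    Tq n d j i (h+1) * (2^(j-(h+1)) * (2^(h+1)-1)^2 * (2^(d-h)-1)) =
    Tq n d j i h * (2^i * (2^(d-i-h)-1) * (2^(j-h)-1) * (2^(n-d-i+h+1)-1)) := by
  have hy : j - h = (j-(h+1)) + 1 := by omega
  have hw : d - h = (d-(h+1)) + 1 := by omega
  have hnd : n-d-i+(h+1) = (n-d-i+h)+1 := by omega
  have hch : ((j-(h+1))+1).choose 2 = (j-(h+1)) + (j-(h+1)).choose 2 := by
    rw [Nat.choose_succ_succ, Nat.choose_one_right]
  rw [Tq_eq, Tq_eq, hnd, hy, hw]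
  rw [div_mul_eq_mul_div, div_mul_eq_mul_div, div_eq_div_iff
    (by have := gden_pos (h+1); have := gden_pos (j-(h+1)); positivity)
    (by have := gden_pos h; have := gden_pos ((j-(h+1))+1); positivity)]
  rw [gnum_succ (d-i) h, gnum_top (d-(h+1)) (j-(h+1)), gnum_top (n-d-i+h) h,
    gden_succ h, gden_succ (j-(h+1)), hch]
  ring

lemma Tq_shift (n d j i h : ℕ) (hid : i + 1 ≤ d) (hnd : d + i + 1 ≤ n) :
    Tq n d j (i+1) h * ((2^(d-i)-1) * (2^(n-d-i+h)-1)) =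
    Tq n d j i h * (2^h * (2^(d-i-h)-1) * (2^(n-d-i)-1)) := by
  rcases Nat.eq_zero_or_pos h with rfl | hh
  · unfold Tq
    simp [gaussBinom]
    try ring
  obtain ⟨k, rfl⟩ : ∃ k, h = k+1 := ⟨h-1, by omega⟩
  have e1 : d - (i+1) = d-i-1 := by omega
  have e2 : n - d - (i+1) = n-d-i-1 := by omega
  rw [Tq_eq, Tq_eq, e1, e2]
  rw [div_mul_eq_mul_div, div_mul_eq_mul_div]
  apply congrArg (fun x => x / (gden (k+1) * gden (j-(k+1)) * gden (k+1)))
  have r1 := gnum_lower (m := d-i) (l := k+1) (by omega) (by omega)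
  have r2 := gnum_lower (m := n-d-i+(k+1)) (l := k+1) (by omega) (by omega)
  rw [show n-d-i+(k+1)-1 = n-d-i-1+(k+1) from by omega,
      show n-d-i+(k+1)-(k+1) = n-d-i from by omega] at r2
  have r12 : ((2^(d-i)-1) * gnum (d-i-1) (k+1)) *
      ((2^(n-d-i+(k+1))-1) * gnum (n-d-i-1+(k+1)) (k+1)) =
      (gnum (d-i) (k+1) * (2^(d-i-(k+1))-1)) *
      (gnum (n-d-i+(k+1)) (k+1) * ((2:ℚ)^(n-d-i)-1)) := by rw [r1, r2]
  linear_combination (2^((k+1)*i + (j-(k+1)).choose 2) * gnum (d-(k+1)) (j-(k+1)) * 2^(k+1)) * r12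

lemma core1 (i x s y y' w c : ℕ) (hx : 1 ≤ x) (hs : 1 ≤ s) (hy : y = y'+1)
    (hw : w = x + i) (hc : x + 2*s ≤ c) :
    (2:ℚ)^y' * (2^s-1)^2 * (2^w - 1) < 2^i * (2^x-1) * (2^y-1) * (2^c-1) := by
  subst hy hw
  have hX := two_le_two_pow hx
  have hS := two_le_two_pow hs
  have pI := two_pow_pos i
  have pY := two_pow_pos y'
  have pS2 : (0:ℚ) < (2^s-1)^2 := by nlinarith
  have pXm : (0:ℚ) < 2^x - 1 := by linarith
  have pYm : (0:ℚ) < 2^(y'+1) - 1 := by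
    have := two_le_two_pow (k := y'+1) (by omega); linarith
  have key : (2:ℚ)^x * (2^s-1)^2 ≤ (2^x-1) * (2^(x+2*s)-1) := by
    have e : (2:ℚ)^(x+2*s) = 2^x * (2^s)^2 := by rw [pow_add, two_mul, pow_add]; ring
    nlinarith [mul_nonneg (mul_nonneg (show (0:ℚ) ≤ 2^x-2 by linarith)
        (show (0:ℚ) ≤ 2^x by positivity)) (sq_nonneg ((2:ℚ)^s)),
      mul_nonneg (show (0:ℚ) ≤ 2^x by positivity) (show (0:ℚ) ≤ 2^s-1 by linarith)]
  have hcc : (2:ℚ)^(x+2*s) - 1 ≤ 2^c - 1 := by have := two_pow_le hc; linarith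
  have hyy : (2:ℚ)^y' ≤ 2^(y'+1) - 1 := by
    have := one_le_two_pow y'; rw [pow_succ]; linarith
  have hD : (2:ℚ)^(x+i) - 1 < 2^x * 2^i := by
    rw [← pow_add]; linarith
  calc (2:ℚ)^y' * (2^s-1)^2 * (2^(x+i)-1)
      < 2^y' * (2^s-1)^2 * (2^x * 2^i) := by
        exact mul_lt_mul_of_pos_left hD (by positivity)
    _ = 2^i * (2^y' * ((2^s-1)^2 * 2^x)) := by ring
    _ ≤ 2^i * ((2^(y'+1)-1) * ((2^x-1)*(2^(x+2*s)-1))) := by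
        apply mul_le_mul_of_nonneg_left _ pI.le
        apply mul_le_mul hyy (by linarith [key]) (by positivity) pYm.le
    _ ≤ 2^i * ((2^(y'+1)-1) * ((2^x-1)*(2^c-1))) := by
        apply mul_le_mul_of_nonneg_left _ pI.le
        apply mul_le_mul_of_nonneg_left _ pYm.le
        exact mul_le_mul_of_nonneg_left hcc pXm.le
    _ = 2^i * (2^x-1) * (2^(y'+1)-1) * (2^c-1) := by ring

lemma core3 (x u : ℕ) (hx : 1 ≤ x) :
    2*((2:ℚ)^(x-1)-1)*(2^u-1) ≤ (2^x-1)*(2^(u+1)-1) := by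
  have e : (2:ℚ)^x = 2^(x-1)*2 := by rw [← pow_succ]; congr 1; omega
  have e2 : (2:ℚ)^(u+1) = 2^u*2 := pow_succ 2 u
  have h1 := one_le_two_pow (x-1)
  have h2 := one_le_two_pow u
  nlinarith [mul_le_mul h1 h2 (by norm_num) (by linarith)]

lemma core2 (i a b y' : ℕ) (ha : 1 ≤ a) (hb : a+1 ≤ b) :
    2^y' * ((2:ℚ)^a-1)^2 * (2^(i+1)-1) *
      ((2^a-1) * (2^(b+a-1)-1) + 2^(a-1) * (2^1-1) * (2^b-1))
    < 2^i * (2^1-1) * (2^(y'+1)-1) * (2^(b+a)-1) * ((2^a-1) * (2^(b+a-1)-1)) := by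
  have eA : (2:ℚ)^a = 2^(a-1)*2 := by rw [← pow_succ]; congr 1; omega
  have eC : (2:ℚ)^(b+a) = 2^(b+a-1)*2 := by rw [← pow_succ]; congr 1; omega
  have eCB : (2:ℚ)^(b+a-1) = 2^(a-1)*2^b := by rw [← pow_add]; congr 1; omega
  have eI : (2:ℚ)^(i+1) = 2^i*2 := pow_succ _ _
  have hBA : (2:ℚ)^a*2 ≤ 2^b := by
    have := two_pow_le hb; rw [pow_succ] at this; linarith
  have hI := one_le_two_pow i
  have hA := two_le_two_pow ha
  have hA2 := one_le_two_pow (a-1)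
  have hB := two_le_two_pow (k := b) (by omega)
  have hC : (2:ℚ) ≤ 2^(b+a-1) := two_le_two_pow (by omega)
  have hyy : (2:ℚ)^y' ≤ 2^(y'+1)-1 := by
    have := one_le_two_pow y'; rw [pow_succ]; linarith
  have pY := two_pow_pos y'
  have pYm : (0:ℚ) < 2^(y'+1)-1 := by
    have := two_le_two_pow (k := y'+1) (by omega); linarith
  have hBra : (0:ℚ) < (2^a-1) * (2^(b+a-1)-1) + 2^(a-1) * (2^1-1) * (2^b-1) := by
    have q1 : (0:ℚ) < (2^a-1) * (2^(b+a-1)-1) := mul_pos (by linarith) (by linarith)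
    have q2 : (0:ℚ) ≤ 2^(a-1) * (2^1-1) * (2^b-1) := by
      apply mul_nonneg (mul_nonneg (by positivity) (by norm_num)) (by linarith)
    linarith
  have hkey : 2*((2:ℚ)^a-1) * ((2^a-1)*(2^(b+a-1)-1) + 2^(a-1)*(2^1-1)*(2^b-1))
      ≤ (2*2^(b+a-1)-1) * (2^(b+a-1)-1) := by
    rw [eA, eCB]
    have hB4 : 4*(2:ℚ)^(a-1) ≤ 2^b := by rw [eA] at hBA; linarith
    nlinarith [mul_nonneg (mul_nonneg (mul_nonneg (show (0:ℚ) ≤ 2^(a-1) by positivity)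
        (show (0:ℚ) ≤ 2^(a-1) by positivity)) (show (0:ℚ) ≤ 2^b by positivity))
        (show (0:ℚ) ≤ 2^b - 4*2^(a-1) by linarith),
      mul_nonneg (mul_nonneg (show (0:ℚ) ≤ 2^(a-1) by positivity)
        (show (0:ℚ) ≤ 2^b by positivity)) (show (0:ℚ) ≤ 4*2^(a-1)-3 by linarith),
      mul_nonneg (show (0:ℚ) ≤ 2^(a-1) by positivity) (show (0:ℚ) ≤ 2^(a-1)-1 by linarith)]
  have hstep : ((2:ℚ)^(i+1)-1) < 2^i*2 := by rw [eI]; linarith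
  calc 2^y' * ((2:ℚ)^a-1)^2 * (2^(i+1)-1) *
        ((2^a-1) * (2^(b+a-1)-1) + 2^(a-1) * (2^1-1) * (2^b-1))
      < 2^y' * ((2^a-1)^2) * (2^i*2) *
        ((2^a-1) * (2^(b+a-1)-1) + 2^(a-1) * (2^1-1) * (2^b-1)) := by
        apply mul_lt_mul_of_pos_right _ hBra
        have pA : (0:ℚ) < 2^a-1 := by linarith
        exact mul_lt_mul_of_pos_left hstep (mul_pos pY (pow_pos pA 2))
    _ = 2^y' * ((2^a-1) *
        (2*(2^a-1) * ((2^a-1)*(2^(b+a-1)-1) + 2^(a-1)*(2^1-1)*(2^b-1))) * 2^i) := by ring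
    _ ≤ 2^y' * ((2^a-1) * ((2*2^(b+a-1)-1) * (2^(b+a-1)-1)) * 2^i) := by
        apply mul_le_mul_of_nonneg_left _ pY.le
        apply mul_le_mul_of_nonneg_right _ (two_pow_pos i).le
        exact mul_le_mul_of_nonneg_left hkey (by linarith)
    _ ≤ (2^(y'+1)-1) * ((2^a-1) * ((2*2^(b+a-1)-1) * (2^(b+a-1)-1)) * 2^i) := by
        apply mul_le_mul_of_nonneg_right hyy
        have q1 : (0:ℚ) ≤ 2^a-1 := by linarith
        have q2 : (0:ℚ) ≤ 2*2^(b+a-1)-1 := by linarith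
        have q3 : (0:ℚ) ≤ 2^(b+a-1)-1 := by linarith
        positivity
    _ = 2^i * (2^1-1) * (2^(y'+1)-1) * (2^(b+a)-1) * ((2^a-1) * (2^(b+a-1)-1)) := by
        rw [eC]; ring


lemma QP_le (n d i h : ℕ) (hid : i+1 ≤ d) (hnd : d+i+1 ≤ n) :
    2^h * ((2:ℚ)^(d-i-h)-1) * (2^(n-d-i)-1) ≤ (2^(d-i)-1) * (2^(n-d-i+h)-1) := by
  have f2 : (2:ℚ)^(n-d-i)-1 ≤ 2^(n-d-i+h)-1 := by
    have := two_pow_le (k := n-d-i) (l := n-d-i+h) (by omega); linarith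
  have f2n : (0:ℚ) ≤ 2^(n-d-i)-1 := by linarith [one_le_two_pow (n-d-i)]
  have hAn : (0:ℚ) ≤ 2^(d-i)-1 := by linarith [one_le_two_pow (d-i)]
  have f1 : (2:ℚ)^h * (2^(d-i-h)-1) ≤ 2^(d-i)-1 := by
    rcases le_or_gt h (d-i) with hc | hc
    · have e : (2:ℚ)^h * 2^(d-i-h) = 2^(d-i) := by rw [← pow_add]; congr 1; omega
      nlinarith [one_le_two_pow h]
    · rw [show d-i-h = 0 from by omega]
      simp only [pow_zero, sub_self, mul_zero, zero_mul]
      exact hAn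
  exact mul_le_mul f1 f2 f2n hAn

lemma QP_lt (n d i h : ℕ) (hh : 1 ≤ h) (hid : i+1 ≤ d) (hnd : d+i+1 ≤ n) :
    2^h * ((2:ℚ)^(d-i-h)-1) * (2^(n-d-i)-1) < (2^(d-i)-1) * (2^(n-d-i+h)-1) := by
  have f2 : (2:ℚ)^(n-d-i)-1 ≤ 2^(n-d-i+h)-1 := by
    have := two_pow_le (k := n-d-i) (l := n-d-i+h) (by omega); linarith
  have f2p : (0:ℚ) < 2^(n-d-i)-1 := by
    have := two_le_two_pow (k := n-d-i) (by omega); linarith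
  have hAp : (0:ℚ) < 2^(d-i)-1 := by
    have := two_le_two_pow (k := d-i) (by omega); linarith
  rcases le_or_gt h (d-i) with hc | hc
  · have f1 : (2:ℚ)^h * (2^(d-i-h)-1) < 2^(d-i)-1 := by
      have e : (2:ℚ)^h * 2^(d-i-h) = 2^(d-i) := by rw [← pow_add]; congr 1; omega
      nlinarith [two_le_two_pow hh]
    calc 2^h * ((2:ℚ)^(d-i-h)-1) * (2^(n-d-i)-1)
        < (2^(d-i)-1) * (2^(n-d-i)-1) := by exact mul_lt_mul_of_pos_right f1 f2p
      _ ≤ (2^(d-i)-1) * (2^(n-d-i+h)-1) := mul_le_mul_of_nonneg_left f2 hAp.le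
  · rw [show d-i-h = 0 from by omega]
    simp only [pow_zero, sub_self, mul_zero, zero_mul]
    exact mul_pos hAp (by linarith)
    
lemma Tq_mono (n d j i h : ℕ) (hn : 2*d+1 ≤ n) (hjd : j ≤ d) (hi : i ≤ d)
    (h1 : h+1 ≤ j) (h2 : h+1 ≤ d-i) : Tq n d j i h < Tq n d j i (h+1) := by
  have p1 : (0:ℚ) < 2^(h+1)-1 := by
    have := two_le_two_pow (k := h+1) (by omega); linarith
  have p2 : (0:ℚ) < 2^(d-h)-1 := by
    have := two_le_two_pow (k := d-h) (by omega); linarith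
  have hD : (0:ℚ) < 2^(j-(h+1)) * (2^(h+1)-1)^2 * (2^(d-h)-1) :=
    mul_pos (mul_pos (two_pow_pos _) (pow_pos p1 2)) p2
  have hT : (0:ℚ) < Tq n d j i h := Tq_pos hjd (by omega) (by omega)
  have hcore := core1 i (d-i-h) (h+1) (j-h) (j-(h+1)) (d-h) (n-d-i+h+1)
      (by omega) (by omega) (by omega) (by omega) (by omega)
  have hr := Tq_ratio n d j i h h1 hjd
  have hlt := mul_lt_mul_of_pos_left hcore hT
  rw [← hr] at hlt
  exact (mul_lt_mul_iff_of_pos_right hD).mp hlt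

lemma Tq_le_shift (n d j i h : ℕ) (hid : i+1 ≤ d) (hnd : d+i+1 ≤ n) :
    Tq n d j (i+1) h ≤ Tq n d j i h := by
  have hs := Tq_shift n d j i h hid hnd
  have hP : (0:ℚ) < (2^(d-i)-1) * (2^(n-d-i+h)-1) := by
    have a1 := two_le_two_pow (k := d-i) (by omega)
    have a2 := two_le_two_pow (k := n-d-i+h) (by omega)
    have : (0:ℚ) < 2^(d-i)-1 := by linarith
    have : (0:ℚ) < 2^(n-d-i+h)-1 := by linarith
    positivity
  have hQP := QP_le n d i h hid hnd
  have : Tq n d j (i+1) h * ((2^(d-i)-1)*(2^(n-d-i+h)-1))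
      ≤ Tq n d j i h * ((2^(d-i)-1)*(2^(n-d-i+h)-1)) := by
    rw [hs]
    exact mul_le_mul_of_nonneg_left hQP (Tq_nonneg n d j i h)
  exact le_of_mul_le_mul_right this hP

lemma QP_dec (n d i h : ℕ) (hid : i+1 ≤ d) (hnd : d+i+1 ≤ n) (h2 : h+1 ≤ d-i) :
    (2^(h+1) * ((2:ℚ)^(d-i-(h+1))-1) * (2^(n-d-i)-1)) * ((2^(d-i)-1) * (2^(n-d-i+h)-1))
    ≤ (2^h * (2^(d-i-h)-1) * (2^(n-d-i)-1)) * ((2^(d-i)-1) * (2^(n-d-i+(h+1))-1)) := by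
  have h3 := core3 (d-i-h) (n-d-i+h) (by omega)
  rw [show d-i-h-1 = d-i-(h+1) from by omega,
      show n-d-i+h+1 = n-d-i+(h+1) from by omega] at h3
  have hcom : (0:ℚ) ≤ 2^h * ((2^(n-d-i)-1) * (2^(d-i)-1)) := by
    have := one_le_two_pow (n-d-i)
    have := one_le_two_pow (d-i)
    have := (two_pow_pos h).le
    apply mul_nonneg ‹(0:ℚ) ≤ 2^h› (mul_nonneg (by linarith) (by linarith))
  have h4 := mul_le_mul_of_nonneg_left h3 hcom
  have e1 : (2^(h+1) * ((2:ℚ)^(d-i-(h+1))-1) * (2^(n-d-i)-1)) * ((2^(d-i)-1) * (2^(n-d-i+h)-1))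
      = 2^h * ((2^(n-d-i)-1) * (2^(d-i)-1)) * (2*(2^(d-i-(h+1))-1)*(2^(n-d-i+h)-1)) := by
    ring
  have e2 : (2^h * ((2:ℚ)^(d-i-h)-1) * (2^(n-d-i)-1)) * ((2^(d-i)-1) * (2^(n-d-i+(h+1))-1))
      = 2^h * ((2^(n-d-i)-1) * (2^(d-i)-1)) * ((2^(d-i-h)-1)*(2^(n-d-i+(h+1))-1)) := by
    ring
  rw [e1, e2]
  exact h4

lemma U_aux (n d j i h : ℕ) (hn : 2*d+1 ≤ n) (hjd : j ≤ d) (hid : i+1 ≤ d)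
    (h1 : h+1 ≤ j) (h2 : h+1 ≤ d-i) :
    (Tq n d j i h - Tq n d j (i+1) h) * (((2^(d-i)-1) * ((2:ℚ)^(n-d-i+h)-1)) * ((2^(d-i)-1) * (2^(n-d-i+(h+1))-1)))
    ≤ (Tq n d j i (h+1) - Tq n d j (i+1) (h+1)) * (((2^(d-i)-1) * (2^(n-d-i+h)-1)) * ((2^(d-i)-1) * (2^(n-d-i+(h+1))-1))) := by
  have hnd : d+i+1 ≤ n := by omega
  have hsh := Tq_shift n d j i h hid hnd
  have hsh' := Tq_shift n d j i (h+1) hid hnd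
  rw [show n-d-i+(h+1) = n-d-i+h+1 from by omega] at hsh' ⊢
  -- P0 := (2^(d-i)-1)*(2^(n-d-i+h)-1), P1 := (2^(d-i)-1)*(2^(n-d-i+h+1)-1)
  -- Q0 := 2^h*(2^(d-i-h)-1)*(2^(n-d-i)-1), Q1 := 2^(h+1)*(2^(d-i-(h+1))-1)*(2^(n-d-i)-1)
  have hdec := QP_dec n d i h hid hnd h2
  rw [show n-d-i+(h+1) = n-d-i+h+1 from by omega] at hdec
  have hTleT := (Tq_mono n d j i h hn hjd (by omega) h1 h2).le
  have hT0 : (0:ℚ) ≤ Tq n d j i h := Tq_nonneg _ _ _ _ _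
  have hT1 : (0:ℚ) ≤ Tq n d j i (h+1) := Tq_nonneg _ _ _ _ _
  have hQP0 := QP_le n d i h hid hnd
  have hQP1 := QP_le n d i (h+1) hid hnd
  rw [show n-d-i+(h+1) = n-d-i+h+1 from by omega] at hQP1
  have hP1n : (0:ℚ) ≤ (2^(d-i)-1) * (2^(n-d-i+h+1)-1) := by
    have := one_le_two_pow (d-i); have := one_le_two_pow (n-d-i+h+1)
    apply mul_nonneg <;> linarith
  have hP0n : (0:ℚ) ≤ (2^(d-i)-1) * ((2:ℚ)^(n-d-i+h)-1) := by
    have := one_le_two_pow (d-i); have := one_le_two_pow (n-d-i+h)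
    apply mul_nonneg <;> linarith
  -- main product inequality
  have key : Tq n d j i h * ((((2:ℚ)^(d-i)-1)*(2^(n-d-i+h)-1) - 2^h*(2^(d-i-h)-1)*(2^(n-d-i)-1)) * ((2^(d-i)-1)*(2^(n-d-i+h+1)-1)))
      ≤ Tq n d j i (h+1) * ((((2:ℚ)^(d-i)-1)*(2^(n-d-i+h+1)-1) - 2^(h+1)*(2^(d-i-(h+1))-1)*(2^(n-d-i)-1)) * ((2^(d-i)-1)*(2^(n-d-i+h)-1))) := by
    apply mul_le_mul hTleT _ _ hT1
    · nlinarith [hdec]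
    · apply mul_nonneg (by linarith) hP1n
  nlinarith [key, hsh, hsh']

lemma PP_pos (n d i h : ℕ) (hid : i+1 ≤ d) (hnd : d+i+1 ≤ n) :
    (0:ℚ) < ((2^(d-i)-1) * ((2:ℚ)^(n-d-i+h)-1)) * ((2^(d-i)-1) * (2^(n-d-i+(h+1))-1)) := by
  have a1 := two_le_two_pow (k := d-i) (by omega)
  have a2 := two_le_two_pow (k := n-d-i+h) (by omega)
  have a3 := two_le_two_pow (k := n-d-i+(h+1)) (by omega)
  apply mul_pos <;> apply mul_pos <;> linarith

lemma U_mono (n d j i h : ℕ) (hn : 2*d+1 ≤ n) (hjd : j ≤ d) (hid : i+1 ≤ d)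
    (h1 : h+1 ≤ j) (h2 : h+1 ≤ d-i) :
    Tq n d j i h - Tq n d j (i+1) h ≤ Tq n d j i (h+1) - Tq n d j (i+1) (h+1) :=
  le_of_mul_le_mul_right (U_aux n d j i h hn hjd hid h1 h2)
    (PP_pos n d i h hid (by omega))

lemma U_top (n d j i h : ℕ) (hn : 2*d+1 ≤ n) (hjd : j ≤ d) (hid : i+1 ≤ d)
    (h1 : h+1 ≤ j) (h2 : h+1 ≤ d-i) :
    Tq n d j i h - Tq n d j (i+1) h < Tq n d j i (h+1) - Tq n d j (i+1) (h+1) := by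
  have hnd : d+i+1 ≤ n := by omega
  have hsh := Tq_shift n d j i h hid hnd
  have hsh' := Tq_shift n d j i (h+1) hid hnd
  rw [show n-d-i+(h+1) = n-d-i+h+1 from by omega] at hsh'
  have hdec := QP_dec n d i h hid hnd h2
  rw [show n-d-i+(h+1) = n-d-i+h+1 from by omega] at hdec
  have hTltT := Tq_mono n d j i h hn hjd (by omega) h1 h2
  have hT0 : (0:ℚ) ≤ Tq n d j i h := Tq_nonneg _ _ _ _ _
  have hQP0 := QP_le n d i h hid hnd
  have hQP1 := QP_lt n d i (h+1) (by omega) hid hnd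
  rw [show n-d-i+(h+1) = n-d-i+h+1 from by omega] at hQP1
  have hP1p : (0:ℚ) < (2^(d-i)-1) * (2^(n-d-i+h+1)-1) := by
    have := two_le_two_pow (k := d-i) (by omega)
    have := two_le_two_pow (k := n-d-i+h+1) (by omega)
    apply mul_pos <;> linarith
  have hP0p : (0:ℚ) < (2^(d-i)-1) * ((2:ℚ)^(n-d-i+h)-1) := by
    have := two_le_two_pow (k := d-i) (by omega)
    have := two_le_two_pow (k := n-d-i+h) (by omega)
    apply mul_pos <;> linarith
  have key : Tq n d j i h * ((((2:ℚ)^(d-i)-1)*(2^(n-d-i+h)-1) - 2^h*(2^(d-i-h)-1)*(2^(n-d-i)-1)) * ((2^(d-i)-1)*(2^(n-d-i+h+1)-1)))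
      < Tq n d j i (h+1) * ((((2:ℚ)^(d-i)-1)*(2^(n-d-i+h+1)-1) - 2^(h+1)*(2^(d-i-(h+1))-1)*(2^(n-d-i)-1)) * ((2^(d-i)-1)*(2^(n-d-i+h)-1))) := by
    have c1 : (((2:ℚ)^(d-i)-1)*(2^(n-d-i+h)-1) - 2^h*(2^(d-i-h)-1)*(2^(n-d-i)-1)) * ((2^(d-i)-1)*(2^(n-d-i+h+1)-1))
        ≤ (((2:ℚ)^(d-i)-1)*(2^(n-d-i+h+1)-1) - 2^(h+1)*(2^(d-i-(h+1))-1)*(2^(n-d-i)-1)) * ((2^(d-i)-1)*(2^(n-d-i+h)-1)) := by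
      nlinarith [hdec]
    have c2 : (0:ℚ) < (((2:ℚ)^(d-i)-1)*(2^(n-d-i+h+1)-1) - 2^(h+1)*(2^(d-i-(h+1))-1)*(2^(n-d-i)-1)) * ((2^(d-i)-1)*(2^(n-d-i+h)-1)) :=
      mul_pos (by linarith) hP0p
    calc Tq n d j i h * ((((2:ℚ)^(d-i)-1)*(2^(n-d-i+h)-1) - 2^h*(2^(d-i-h)-1)*(2^(n-d-i)-1)) * ((2^(d-i)-1)*(2^(n-d-i+h+1)-1)))
        ≤ Tq n d j i h * ((((2:ℚ)^(d-i)-1)*(2^(n-d-i+h+1)-1) - 2^(h+1)*(2^(d-i-(h+1))-1)*(2^(n-d-i)-1)) * ((2^(d-i)-1)*(2^(n-d-i+h)-1))) :=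
          mul_le_mul_of_nonneg_left c1 hT0
      _ < Tq n d j i (h+1) * ((((2:ℚ)^(d-i)-1)*(2^(n-d-i+h+1)-1) - 2^(h+1)*(2^(d-i-(h+1))-1)*(2^(n-d-i)-1)) * ((2^(d-i)-1)*(2^(n-d-i+h)-1))) :=
          (mul_lt_mul_iff_of_pos_right c2).mpr hTltT
  have final : (Tq n d j i h - Tq n d j (i+1) h) * (((2^(d-i)-1) * ((2:ℚ)^(n-d-i+h)-1)) * ((2^(d-i)-1) * (2^(n-d-i+h+1)-1)))
      < (Tq n d j i (h+1) - Tq n d j (i+1) (h+1)) * (((2^(d-i)-1) * ((2:ℚ)^(n-d-i+h)-1)) * ((2^(d-i)-1) * (2^(n-d-i+h+1)-1))) := by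
    nlinarith [key, hsh, hsh']
  have hPP : (0:ℚ) < ((2^(d-i)-1) * ((2:ℚ)^(n-d-i+h)-1)) * ((2^(d-i)-1) * (2^(n-d-i+h+1)-1)) :=
    mul_pos hP0p hP1p
  exact lt_of_mul_lt_mul_right final hPP.le

lemma V_top2 (n d j i : ℕ) (hn : 2*d+1 ≤ n) (hjd : j ≤ d) (hid : i+1 ≤ d)
    (haj : d-i ≤ j) :
    Tq n d j i (d-i-1) + Tq n d j (i+1) (d-i-1) < Tq n d j i (d-i) := by
  have hnd : d+i+1 ≤ n := by omega
  have hr := Tq_ratio n d j i (d-i-1) (by omega) hjd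
  rw [show d-i-1+1 = d-i from by omega] at hr
  rw [show d-(d-i-1) = i+1 from by omega, show d-i-(d-i-1) = 1 from by omega,
      show n-d-i+(d-i-1)+1 = n-d-i+(d-i) from by omega,
      show j-(d-i-1) = (j-(d-i))+1 from by omega] at hr
  have hsh := Tq_shift n d j i (d-i-1) hid hnd
  rw [show d-i-(d-i-1) = 1 from by omega,
      show n-d-i+(d-i-1) = n-d-i+(d-i)-1 from by omega] at hsh
  have hc := core2 i (d-i) (n-d-i) (j-(d-i)) (by omega) (by omega)
  -- hc : D * (P + Q') < N * P  in matching shapes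
  have hT : (0:ℚ) < Tq n d j i (d-i-1) := Tq_pos hjd (by omega) (by omega)
  have hDp : (0:ℚ) < 2^(j-(d-i)) * ((2:ℚ)^(d-i)-1)^2 * (2^(i+1)-1) := by
    have := two_le_two_pow (k := d-i) (by omega)
    have := two_le_two_pow (k := i+1) (by omega)
    have h1 : (0:ℚ) < 2^(d-i)-1 := by linarith
    apply mul_pos (mul_pos (two_pow_pos _) (pow_pos h1 2)) (by linarith)
  have hPp : (0:ℚ) < ((2:ℚ)^(d-i)-1) * (2^(n-d-i+(d-i)-1)-1) := by
    have := two_le_two_pow (k := d-i) (by omega)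
    have := two_le_two_pow (k := n-d-i+(d-i)-1) (by omega)
    apply mul_pos <;> linarith
  have hz : Tq n d j (i+1) (d-i) = 0 := Tq_eq_zero (by omega)
  have hDP : (0:ℚ) < (2^(j-(d-i)) * ((2:ℚ)^(d-i)-1)^2 * (2^(i+1)-1)) * (((2:ℚ)^(d-i)-1) * (2^(n-d-i+(d-i)-1)-1)) := mul_pos hDp hPp
  have step := mul_lt_mul_of_pos_left hc hT
  -- assemble
  have final : (Tq n d j i (d-i-1) + Tq n d j (i+1) (d-i-1)) *
      ((2^(j-(d-i)) * ((2:ℚ)^(d-i)-1)^2 * (2^(i+1)-1)) * (((2:ℚ)^(d-i)-1) * (2^(n-d-i+(d-i)-1)-1)))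
      < Tq n d j i (d-i) *
      ((2^(j-(d-i)) * ((2:ℚ)^(d-i)-1)^2 * (2^(i+1)-1)) * (((2:ℚ)^(d-i)-1) * (2^(n-d-i+(d-i)-1)-1))) := by
    nlinarith [step, hsh, hr]
  exact lt_of_mul_lt_mul_right final hDP.le

lemma V_mono (n d j i h : ℕ) (hn : 2*d+1 ≤ n) (hjd : j ≤ d) (hid : i+1 ≤ d)
    (h1 : h+1 ≤ j) (h2 : h+1 ≤ d-i) :
    Tq n d j i h + Tq n d j (i+1) h ≤ Tq n d j i (h+1) + Tq n d j (i+1) (h+1) := by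
  rcases le_or_gt (h+1+1) (d-i) with hc | hc
  · have m1 := (Tq_mono n d j i h hn hjd (by omega) h1 h2).le
    have m2 := (Tq_mono n d j (i+1) h hn hjd (by omega) h1 (by omega)).le
    linarith
  · have he : h+1 = d-i := by omega
    have hV := V_top2 n d j i hn hjd hid (by omega)
    have hz : Tq n d j (i+1) (h+1) = 0 := Tq_eq_zero (by omega)
    rw [he] at hz
    rw [show h = d-i-1 from by omega, show d-i-1+1 = d-i from by omega, hz]
    linarith

lemma V_top (n d j i h : ℕ) (hn : 2*d+1 ≤ n) (hjd : j ≤ d) (hid : i+1 ≤ d)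
    (h1 : h+1 ≤ j) (h2 : h+1 ≤ d-i) :
    Tq n d j i h + Tq n d j (i+1) h < Tq n d j i (h+1) + Tq n d j (i+1) (h+1) := by
  rcases le_or_gt (h+1+1) (d-i) with hc | hc
  · have m1 := Tq_mono n d j i h hn hjd (by omega) h1 h2
    have m2 := (Tq_mono n d j (i+1) h hn hjd (by omega) h1 (by omega)).le
    linarith
  · have he : h+1 = d-i := by omega
    have hV := V_top2 n d j i hn hjd hid (by omega)
    have hz : Tq n d j (i+1) (h+1) = 0 := Tq_eq_zero (by omega)
    rw [he] at hz
    rw [show h = d-i-1 from by omega, show d-i-1+1 = d-i from by omega, hz]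
    linarith

lemma sum_alt_succ (U : ℕ → ℚ) (k : ℕ) :
    (∑ h ∈ Finset.range (k+1+1), (-1:ℚ)^(k+1-h) * U h)
    = U (k+1) - ∑ h ∈ Finset.range (k+1), (-1:ℚ)^(k-h) * U h := by
  rw [Finset.sum_range_succ, Nat.sub_self, pow_zero, one_mul]
  have hc : ∀ h ∈ Finset.range (k+1), (-1:ℚ)^(k+1-h) * U h = -((-1:ℚ)^(k-h) * U h) := by
    intro h hh
    have hh' : h < k+1 := Finset.mem_range.mp hh
    rw [show k+1-h = (k-h)+1 from by omega, pow_succ]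
    ring
  rw [Finset.sum_congr rfl hc, Finset.sum_neg_distrib]
  ring

lemma pair_bounds (U : ℕ → ℚ) : ∀ k : ℕ, (∀ h, h+1 ≤ k → U h ≤ U (h+1)) → 0 ≤ U 0 →
    0 ≤ (∑ h ∈ Finset.range (k+1), (-1:ℚ)^(k-h) * U h) ∧
      (∑ h ∈ Finset.range (k+1), (-1:ℚ)^(k-h) * U h) ≤ U k := by
  intro k
  induction k with
  | zero => intro _ h0; simp [h0]
  | succ k ih =>
    intro hmono h0
    obtain ⟨l, u⟩ := ih (fun h hh => hmono h (by omega)) h0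
    rw [sum_alt_succ]
    have hk := hmono k (by omega)
    constructor <;> linarith

lemma alt_pos (U : ℕ → ℚ) (m : ℕ) (hm : 1 ≤ m) (hmono : ∀ h, h+1 ≤ m → U h ≤ U (h+1))
    (h0 : 0 ≤ U 0) (htop : U (m-1) < U m) :
    0 < ∑ h ∈ Finset.range (m+1), (-1:ℚ)^(m-h) * U h := by
  obtain ⟨k, rfl⟩ : ∃ k, m = k+1 := ⟨m-1, by omega⟩
  rw [sum_alt_succ]
  obtain ⟨l, u⟩ := pair_bounds U k (fun h hh => hmono h (by omega)) h0
  have : U (k+1-1) < U (k+1) := htop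
  rw [Nat.add_sub_cancel] at this
  linarith

lemma sign_lemma (U : ℕ → ℚ) (j m : ℕ) (hmj : m ≤ j) (hm : 1 ≤ m)
    (hz : ∀ h, m < h → h ≤ j → U h = 0)
    (hmono : ∀ h, h+1 ≤ m → U h ≤ U (h+1)) (h0 : 0 ≤ U 0) (htop : U (m-1) < U m) :
    0 < (-1:ℚ)^(j-m) * ∑ h ∈ Finset.range (j+1), (-1:ℚ)^(j-h) * U h := by
  have hsub : ∑ h ∈ Finset.range (j+1), (-1:ℚ)^(j-h) * U h
      = ∑ h ∈ Finset.range (m+1), (-1:ℚ)^(j-h) * U h := by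
    apply (Finset.sum_subset ?_ ?_).symm
    · intro x hx
      simp only [Finset.mem_range] at hx ⊢
      omega
    · intro x hx hnx
      simp only [Finset.mem_range] at hx hnx
      rw [hz x (by omega) (by omega), mul_zero]
  have hfac : ∀ h ∈ Finset.range (m+1), (-1:ℚ)^(j-h) * U h
      = (-1:ℚ)^(j-m) * ((-1:ℚ)^(m-h) * U h) := by
    intro h hh
    have hh' : h < m+1 := Finset.mem_range.mp hh
    rw [show j-h = (j-m)+(m-h) from by omega, pow_add]
    ring
  rw [hsub, Finset.sum_congr rfl hfac, ← Finset.mul_sum, ← mul_assoc, ← pow_add,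
    Even.neg_one_pow ⟨j-m, rfl⟩, one_mul]
  exact alt_pos U m hm hmono h0 htop

end GrassAux

open GrassAux in
theorem grassG_abs_strict_anti_q2 (n d i j : ℕ) (hn : 2 * d + 1 ≤ n)
    (hi : i ≤ d - 1) (hj1 : 1 ≤ j) (hj2 : j ≤ d) :
    |grassG (2 : ℚ) n d j (i + 1)| < |grassG (2 : ℚ) n d j i| := by
  have hd1 : 1 ≤ d := hj1.trans hj2
  have hid : i + 1 ≤ d := by omega
  have hm1 : 1 ≤ min j (d-i) := by omega
  have hmj : min j (d-i) ≤ j := by omega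
  -- U := difference sequence
  have hU := sign_lemma (fun h => Tq n d j i h - Tq n d j (i+1) h) j (min j (d-i)) hmj hm1
    (fun h hh1 hh2 => by
      have z1 : Tq n d j i h = 0 := Tq_eq_zero (by omega)
      have z2 : Tq n d j (i+1) h = 0 := Tq_eq_zero (by omega)
      simp only [z1, z2, sub_zero])
    (fun h hh => U_mono n d j i h hn hj2 hid (by omega) (by omega))
    (by
      have := Tq_le_shift n d j i 0 hid (by omega)
      beta_reduce
      linarith)
    (by
      have hh := U_top n d j i (min j (d-i) - 1) hn hj2 hid (by omega) (by omega)
      rw [show min j (d-i) - 1 + 1 = min j (d-i) from by omega] at hh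
      simpa using hh)
  have hV := sign_lemma (fun h => Tq n d j i h + Tq n d j (i+1) h) j (min j (d-i)) hmj hm1
    (fun h hh1 hh2 => by
      have z1 : Tq n d j i h = 0 := Tq_eq_zero (by omega)
      have z2 : Tq n d j (i+1) h = 0 := Tq_eq_zero (by omega)
      simp only [z1, z2, add_zero])
    (fun h hh => V_mono n d j i h hn hj2 hid (by omega) (by omega))
    (by
      have a1 := Tq_nonneg n d j i 0
      have a2 := Tq_nonneg n d j (i+1) 0
      beta_reduce
      linarith)
    (by
      have hh := V_top n d j i (min j (d-i) - 1) hn hj2 hid (by omega) (by omega)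
      rw [show min j (d-i) - 1 + 1 = min j (d-i) from by omega] at hh
      simpa using hh)
  beta_reduce at hU hV
  have hGU : (∑ h ∈ Finset.range (j+1), (-1:ℚ)^(j-h) * (Tq n d j i h - Tq n d j (i+1) h))
      = grassG 2 n d j i - grassG 2 n d j (i+1) := by
    rw [grassG_eq, grassG_eq, ← Finset.sum_sub_distrib]
    exact Finset.sum_congr rfl fun h _ => by ring
  have hGV : (∑ h ∈ Finset.range (j+1), (-1:ℚ)^(j-h) * (Tq n d j i h + Tq n d j (i+1) h))
      = grassG 2 n d j i + grassG 2 n d j (i+1) := by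
    rw [grassG_eq, grassG_eq, ← Finset.sum_add_distrib]
    exact Finset.sum_congr rfl fun h _ => by ring
  rw [hGU] at hU
  rw [hGV] at hV
  have hee : (-1:ℚ)^(j - min j (d-i)) * (-1:ℚ)^(j - min j (d-i)) = 1 := by
    rw [← pow_add]
    exact Even.neg_one_pow ⟨j - min j (d-i), rfl⟩
  have hprod : 0 < (grassG 2 n d j i - grassG 2 n d j (i+1)) *
      (grassG 2 n d j i + grassG 2 n d j (i+1)) := by
    have h2 := mul_pos hU hV
    calc (0:ℚ) < ((-1:ℚ)^(j - min j (d-i)) * (grassG 2 n d j i - grassG 2 n d j (i+1))) *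
        ((-1:ℚ)^(j - min j (d-i)) * (grassG 2 n d j i + grassG 2 n d j (i+1))) := h2
      _ = ((-1:ℚ)^(j - min j (d-i)) * (-1:ℚ)^(j - min j (d-i))) *
          ((grassG 2 n d j i - grassG 2 n d j (i+1)) *
            (grassG 2 n d j i + grassG 2 n d j (i+1))) := by ring
      _ = (grassG 2 n d j i - grassG 2 n d j (i+1)) *
          (grassG 2 n d j i + grassG 2 n d j (i+1)) := by rw [hee, one_mul]
  have hsq : (grassG 2 n d j (i+1))^2 < (grassG 2 n d j i)^2 := by nlinarith [hprod]
  exact sq_lt_sq.mp hsq
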